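/- Let μ > 1, ρ ∈ (0,1), and suppose (ε_k) is a positive sequence with ε_{k+1} ≤ ε_k - ε_k^μ, ε_0 ∈ (0,1). Suppose u : B_{1/2} → ℝ and q is a quadratic polynomial with |u(x) - q(x)| ≤ C ε_k ρ^{2k} for all |x| ≤ ρ^k and all k ≥ 0. Then there exist constants C' > 0 and c > 0 (depending on C, μ, ρ, ε_0) such that |u(x) - q(x)| ≤ C' |x|² |log|x||^{-c} for all 0 < |x| < 1/2. -/

import Mathlib

open Real

private lemma bern_aux (t p : ℝ) (ht0 : 0 < t) (ht1 : t < 1) (hp : 0 < p) :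
    1 + p * t ≤ (1 - t) ^ (-p) := by
  have h1 : (0:ℝ) < 1 - t := by linarith
  have hlog : Real.log (1 - t) ≤ -t := by
    have := Real.log_le_sub_one_of_pos h1
    linarith
  rw [Real.rpow_def_of_pos h1]
  have h3 : p * t ≤ Real.log (1 - t) * (-p) := by nlinarith
  calc 1 + p * t ≤ Real.exp (p * t) := by
        have := Real.add_one_le_exp (p * t); linarith
    _ ≤ _ := Real.exp_le_exp.mpr h3

private lemma eps_bound (μ : ℝ) (hμ : 1 < μ) (ε : ℕ → ℝ) (hεpos : ∀ k, 0 < ε k)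
    (hdec : ∀ k, ε (k + 1) ≤ ε k - ε k ^ μ) (k : ℕ) :
    ε k ≤ (1 + (μ - 1) * k) ^ (-(μ - 1)⁻¹) := by
  have hμ1 : (0:ℝ) < μ - 1 := by linarith
  -- each ε k ^ (μ-1) < 1
  have hlt1 : ∀ j, ε j ^ (μ - 1) < 1 := by
    intro j
    have h1 : ε j ^ μ < ε j := by
      have := hdec j; have := hεpos (j + 1); linarith
    have h2 : ε j ^ μ = ε j * ε j ^ (μ - 1) := by
      have h := Real.rpow_add (hεpos j) 1 (μ - 1)
      rw [Real.rpow_one] at h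
      rw [show (1:ℝ) + (μ - 1) = μ by ring] at h
      exact h
    nlinarith [hεpos j, Real.rpow_pos_of_pos (hεpos j) (μ - 1)]
  -- the key recursion for δ j = ε j ^ (1 - μ)
  have hδ : ∀ j, ε j ^ (1 - μ) + (μ - 1) ≤ ε (j + 1) ^ (1 - μ) := by
    intro j
    set t := ε j ^ (μ - 1) with ht
    have ht0 : 0 < t := Real.rpow_pos_of_pos (hεpos j) _
    have ht1 : t < 1 := hlt1 j
    have hmul : ε j ^ μ = ε j * t := by
      rw [ht]
      have h := Real.rpow_add (hεpos j) 1 (μ - 1)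
      rw [Real.rpow_one] at h
      rw [show (1:ℝ) + (μ - 1) = μ by ring] at h
      exact h
    have hle : ε (j + 1) ≤ ε j * (1 - t) := by
      have := hdec j; rw [hmul] at this; linarith
    have h1 : (ε j * (1 - t)) ^ (1 - μ) ≤ ε (j + 1) ^ (1 - μ) :=
      Real.rpow_le_rpow_of_nonpos (hεpos (j + 1)) hle (by linarith)
    have h2 : (ε j * (1 - t)) ^ (1 - μ) = ε j ^ (1 - μ) * (1 - t) ^ (1 - μ) :=
      Real.mul_rpow (hεpos j).le (by linarith)
    have h3 : 1 + (μ - 1) * t ≤ (1 - t) ^ (1 - μ) := by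
      have := bern_aux t (μ - 1) ht0 ht1 hμ1
      rwa [show (1:ℝ) - μ = -(μ - 1) by ring]
    have hδpos : 0 < ε j ^ (1 - μ) := Real.rpow_pos_of_pos (hεpos j) _
    have hid : ε j ^ (1 - μ) * t = 1 := by
      rw [ht, ← Real.rpow_add (hεpos j)]
      norm_num
    calc ε j ^ (1 - μ) + (μ - 1)
        = ε j ^ (1 - μ) * (1 + (μ - 1) * t) := by
          rw [mul_add, mul_one, mul_comm (μ - 1) t, ← mul_assoc, hid, one_mul]
      _ ≤ ε j ^ (1 - μ) * (1 - t) ^ (1 - μ) := by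
          exact mul_le_mul_of_nonneg_left h3 hδpos.le
      _ = _ := h2.symm
      _ ≤ _ := h1
  -- induction: δ k ≥ 1 + (μ-1) k
  have hind : ∀ j : ℕ, 1 + (μ - 1) * j ≤ ε j ^ (1 - μ) := by
    intro j
    induction j with
    | zero =>
      simp only [Nat.cast_zero, mul_zero, add_zero]
      refine Real.one_le_rpow_of_pos_of_le_one_of_nonpos (hεpos 0) ?_ (by linarith)
      have h := hlt1 0
      by_contra hcon
      push_neg at hcon
      have : (1:ℝ) ≤ ε 0 ^ (μ - 1) := Real.one_le_rpow hcon.le hμ1.le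
      linarith
    | succ n ih =>
      have := hδ n
      push_cast
      linarith
  -- conclude
  have hpos : (0:ℝ) < 1 + (μ - 1) * k := by positivity
  have h1 : (ε k ^ (1 - μ)) ^ (-(μ - 1)⁻¹) ≤ (1 + (μ - 1) * k) ^ (-(μ - 1)⁻¹) :=
    Real.rpow_le_rpow_of_nonpos hpos (hind k) (neg_nonpos.mpr (by positivity))
  have h2 : (ε k ^ (1 - μ)) ^ (-(μ - 1)⁻¹) = ε k := by
    rw [← Real.rpow_mul (hεpos k).le]
    rw [show (1 - μ) * -(μ - 1)⁻¹ = (μ - 1) * (μ - 1)⁻¹ by ring,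
      mul_inv_cancel₀ (by linarith), Real.rpow_one]
  rwa [h2] at h1

/-- Slow improvement `ε_{k+1} ≤ ε_k - ε_k^μ` across dyadic scales yields the logarithmic
modulus: if `|u - q| ≤ C ε_k ρ^{2k}` on `B_{ρ^k}` for all `k`, then
`|u - q| ≤ C' |x|² |log |x||^{-c}` for `0 < |x| < 1/2`. -/
theorem stmt_10 (d : ℕ) (μ ρ C : ℝ) (hμ : 1 < μ)
    (hρ : ρ ∈ Set.Ioo (0 : ℝ) 1) (hC : 0 < C)
    (ε : ℕ → ℝ) (hεpos : ∀ k, 0 < ε k) (hε0 : ε 0 < 1)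
    (hdec : ∀ k, ε (k + 1) ≤ ε k - ε k ^ μ)
    (u : EuclideanSpace ℝ (Fin d) → ℝ) (q : EuclideanSpace ℝ (Fin d) → ℝ)
    (hquad : ∃ (A : Matrix (Fin d) (Fin d) ℝ) (b : Fin d → ℝ) (c : ℝ), ∀ x,
      q x = (1 / 2) * (∑ i, ∑ j, A i j * x i * x j) + (∑ i, b i * x i) + c)
    (hu : ∀ k : ℕ, ∀ x, ‖x‖ ≤ ρ ^ k → |u x - q x| ≤ C * ε k * ρ ^ (2 * k)) :
    ∃ C' > (0 : ℝ), ∃ c > (0 : ℝ), ∀ x, 0 < ‖x‖ → ‖x‖ < 1 / 2 →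
      |u x - q x| ≤ C' * ‖x‖ ^ 2 * |Real.log ‖x‖| ^ (-c) := by
  obtain ⟨hρ0, hρ1⟩ := hρ
  have hμ1 : (0:ℝ) < μ - 1 := by linarith
  set c : ℝ := (μ - 1)⁻¹ with hc
  have hcpos : 0 < c := by positivity
  set L : ℝ := -Real.log ρ with hL
  have hLpos : 0 < L := by
    have := Real.log_neg hρ0 hρ1
    simp only [hL]; linarith
  set m : ℝ := min 1 (μ - 1) with hm
  have hmpos : 0 < m := lt_min one_pos hμ1
  refine ⟨C / ρ ^ 2 * (m / L) ^ (-c), by positivity, c, hcpos, ?_⟩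
  intro x hx0 hx12
  set r : ℝ := ‖x‖ with hr
  have hlogr : Real.log r < 0 := Real.log_neg hx0 (by linarith)
  -- choose k
  set k : ℕ := ⌊Real.log r / Real.log ρ⌋₊ with hk
  have hlogρ : Real.log ρ < 0 := Real.log_neg hρ0 hρ1
  have hratio : 0 ≤ Real.log r / Real.log ρ := by
    apply div_nonneg_of_nonpos hlogr.le hlogρ.le
  have hk1 : (k : ℝ) ≤ Real.log r / Real.log ρ := Nat.floor_le hratio
  have hk2 : Real.log r / Real.log ρ < k + 1 := Nat.lt_floor_add_one _
  -- r ≤ ρ^k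
  have hrle : r ≤ ρ ^ k := by
    have h1 : Real.log r ≤ (k : ℝ) * Real.log ρ := by
      have := mul_le_mul_of_nonpos_right hk1 hlogρ.le
      rwa [div_mul_cancel₀ _ (ne_of_lt hlogρ)] at this
    rw [← Real.log_le_log_iff hx0 (pow_pos hρ0 k), Real.log_pow]
    exact_mod_cast h1
  -- ρ^(k+1) < r
  have hrgt : ρ ^ (k + 1) < r := by
    have h1 : ((k : ℝ) + 1) * Real.log ρ < Real.log r := by
      have := mul_lt_mul_of_neg_right hk2 hlogρ
      rwa [div_mul_cancel₀ _ (ne_of_lt hlogρ)] at this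
    rw [← Real.log_lt_log_iff (pow_pos hρ0 _) hx0, Real.log_pow]
    push_cast
    exact_mod_cast h1
  -- basic bound
  have hmain := hu k x hrle
  -- ε k bound
  have hεk := eps_bound μ hμ ε hεpos hdec k
  -- 1 + (μ-1)k ≥ m (k+1)
  have hstep : m * (k + 1) ≤ 1 + (μ - 1) * k := by
    have h1 : m ≤ 1 := min_le_left _ _
    have h2 : m ≤ μ - 1 := min_le_right _ _
    have : (0:ℝ) ≤ (k:ℝ) := Nat.cast_nonneg k
    nlinarith
  -- |log r| ≤ (k+1) L
  have hlogbound : |Real.log r| ≤ (k + 1) * L := by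
    rw [abs_of_neg hlogr]
    have h1 : ((k : ℝ) + 1) * Real.log ρ < Real.log r := by
      have := mul_lt_mul_of_neg_right hk2 hlogρ
      rwa [div_mul_cancel₀ _ (ne_of_lt hlogρ)] at this
    simp only [hL]
    nlinarith
  have hlogabs : 0 < |Real.log r| := abs_pos.mpr hlogr.ne
  -- m/L * |log r| ≤ m (k+1) ≤ 1 + (μ-1) k
  have hchain : m / L * |Real.log r| ≤ 1 + (μ - 1) * k := by
    have : m / L * |Real.log r| ≤ m / L * ((k + 1) * L) := by
      apply mul_le_mul_of_nonneg_left hlogbound (by positivity)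
    calc m / L * |Real.log r| ≤ m / L * ((k + 1) * L) := this
      _ = m * (k + 1) := by field_simp
      _ ≤ _ := hstep
  have hmL : (0:ℝ) < m / L * |Real.log r| := by positivity
  have hεk2 : ε k ≤ (m / L * |Real.log r|) ^ (-c) := by
    refine hεk.trans ?_
    exact Real.rpow_le_rpow_of_nonpos hmL hchain (neg_nonpos.mpr hcpos.le)
  have hsplit : (m / L * |Real.log r|) ^ (-c) = (m / L) ^ (-c) * |Real.log r| ^ (-c) :=
    Real.mul_rpow (by positivity) hlogabs.le
  -- ρ^(2k) < r^2 / ρ^2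
  have hρ2k : ρ ^ (2 * k) ≤ r ^ 2 / ρ ^ 2 := by
    have h1 : ρ ^ (k + 1) ≤ r := hrgt.le
    have h2 : (ρ ^ (k + 1)) ^ 2 ≤ r ^ 2 := by
      apply pow_le_pow_left₀ (by positivity) h1
    have h3 : (ρ ^ (k + 1)) ^ 2 = ρ ^ (2 * k) * ρ ^ 2 := by ring
    rw [h3] at h2
    rw [le_div_iff₀ (by positivity)]
    linarith
  -- combine
  have hεkpos := hεpos k
  have hrpowpos : 0 < |Real.log r| ^ (-c) := Real.rpow_pos_of_pos hlogabs _
  have hmLpow : 0 < (m / L) ^ (-c) := Real.rpow_pos_of_pos (by positivity) _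
  calc |u x - q x| ≤ C * ε k * ρ ^ (2 * k) := hmain
    _ ≤ C * ((m / L) ^ (-c) * |Real.log r| ^ (-c)) * (r ^ 2 / ρ ^ 2) := by
        apply mul_le_mul
        · apply mul_le_mul_of_nonneg_left _ hC.le
          rw [← hsplit]; exact hεk2
        · exact hρ2k
        · positivity
        · positivity
    _ = C / ρ ^ 2 * (m / L) ^ (-c) * r ^ 2 * |Real.log r| ^ (-c) := by ring
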